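/- Let h ∈ (2/3, 1], α ∈ (0,1] and τ > 0 be real numbers with τ > 40.5·(4 − 3h)/((3h − 2)²·α), and let Y be a real random variable whose distribution is the Gaussian measure on ℝ with mean μ_y = (3h − 2)·α·τ and variance σ_y² = (4 − 3h)·α·τ. Then Pr(Y ≤ 0) < 2·10⁻¹⁰. (The paper's security-foundation claim: under the supermajority condition, honest votes dominate with high probability.) -/

import Mathlib

open MeasureTheory ProbabilityTheory Real Set Filter

lemma my_integrableOn_exp_mul {c : ℝ} (hc : 0 < c) :
    IntegrableOn (fun x => Real.exp (c * x)) (Set.Iic (0:ℝ)) := by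
  have h1 : Integrable ((Set.Iic (0:ℝ)).indicator Real.exp) :=
    (integrable_indicator_iff measurableSet_Iic).2 (integrableOn_exp_Iic 0)
  have h2 := h1.comp_mul_left' hc.ne'
  have h3 : (fun x => (Set.Iic (0:ℝ)).indicator Real.exp (c * x))
      = (Set.Iic (0:ℝ)).indicator (fun x => Real.exp (c * x)) := by
    ext x
    by_cases hx : x ≤ 0
    · rw [Set.indicator_of_mem (by simpa using mul_nonpos_of_nonneg_of_nonpos hc.le hx :
        c * x ∈ Set.Iic (0:ℝ)), Set.indicator_of_mem (by simpa using hx)]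
    · rw [Set.indicator_of_notMem, Set.indicator_of_notMem]
      · simpa using hx
      · simp only [Set.mem_Iic, not_le] at hx ⊢
        positivity
  rw [h3] at h2
  exact (integrable_indicator_iff measurableSet_Iic).1 h2

lemma my_integral_exp_mul_Iic {c : ℝ} (hc : 0 < c) :
    ∫ x in Set.Iic (0:ℝ), Real.exp (c * x) = 1 / c := by
  have hderiv : ∀ x ∈ Set.Iic (0:ℝ), HasDerivAt (fun x => Real.exp (c * x) / c)
      (Real.exp (c * x)) x := by
    intro x _
    have h := ((Real.hasDerivAt_exp (c * x)).comp x
      ((hasDerivAt_id x).const_mul c)).div_const c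
    simpa [mul_comm, mul_div_assoc, mul_div_cancel_left₀, hc.ne'] using h
  have htend : Tendsto (fun x => Real.exp (c * x) / c) atBot (nhds 0) := by
    have : Tendsto (fun x : ℝ => c * x) atBot atBot :=
      Tendsto.const_mul_atBot hc tendsto_id
    have := (Real.tendsto_exp_atBot.comp this).div_const c
    simpa using this
  have := integral_Iic_of_hasDerivAt_of_tendsto' hderiv (my_integrableOn_exp_mul hc) htend
  simpa using this

lemma my_gauss_tail {μ v : ℝ} (hμ : 0 < μ) (hv : 0 < v) (key : 40.5 * v < μ ^ 2) :
    gaussianReal μ v.toNNReal (Set.Iic 0) < ENNReal.ofReal (2 / 10 ^ 10) := by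
  have hvne : v.toNNReal ≠ 0 := by
    rw [Ne, Real.toNNReal_eq_zero, not_le]; exact hv
  have hcoe : (v.toNNReal : ℝ) = v := Real.coe_toNNReal _ hv.le
  rw [gaussianReal_apply_eq_integral _ hvne,
    ENNReal.ofReal_lt_ofReal_iff (by norm_num)]
  set c := μ / v with hcdef
  have hc : 0 < c := div_pos hμ hv
  set K := (Real.sqrt (2 * π * v))⁻¹ * Real.exp (-μ ^ 2 / (2 * v)) with hKdef
  have hKnn : 0 ≤ K := by positivity
  have hbound : ∀ x ∈ Set.Iic (0:ℝ),
      gaussianPDFReal μ v.toNNReal x ≤ K * Real.exp (c * x) := by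
    intro x _
    rw [gaussianPDFReal, hcoe, hKdef]
    have hmul : (Real.sqrt (2 * π * v))⁻¹ * Real.exp (-μ ^ 2 / (2 * v)) * Real.exp (c * x)
        = (Real.sqrt (2 * π * v))⁻¹ * Real.exp (-μ ^ 2 / (2 * v) + c * x) := by
      rw [Real.exp_add]; ring
    rw [hmul]
    apply mul_le_mul_of_nonneg_left _ (by positivity)
    apply Real.exp_le_exp.2
    have hrhs : -μ ^ 2 / (2 * v) + c * x = (-μ ^ 2 + 2 * μ * x) / (2 * v) := by
      rw [hcdef]; field_simp
    rw [hrhs, div_le_div_iff_of_pos_right (by positivity : (0:ℝ) < 2 * v)]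
    nlinarith [sq_nonneg x]
  have hintg : IntegrableOn (fun x => K * Real.exp (c * x)) (Set.Iic (0:ℝ)) :=
    (my_integrableOn_exp_mul hc).const_mul K
  calc ∫ x in Set.Iic (0:ℝ), gaussianPDFReal μ v.toNNReal x
      ≤ ∫ x in Set.Iic (0:ℝ), K * Real.exp (c * x) :=
        setIntegral_mono_on ((integrable_gaussianPDFReal μ v.toNNReal).integrableOn)
          hintg measurableSet_Iic hbound
    _ = K * (1 / c) := by rw [integral_const_mul, my_integral_exp_mul_Iic hc]
    _ = (Real.sqrt (2 * π * v))⁻¹ * Real.exp (-μ ^ 2 / (2 * v)) * (v / μ) := by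
        rw [hKdef, hcdef, one_div, inv_div]
    _ < 2 / 10 ^ 10 := by
        -- numeric lemma inline
        have hπ : (1.77 : ℝ) < Real.sqrt π := by
          rw [show (1.77:ℝ) = Real.sqrt (1.77^2) by rw [Real.sqrt_sq]; norm_num]
          exact Real.sqrt_lt_sqrt (by norm_num) (by nlinarith [Real.pi_gt_d6])
        have hsq : 9 * Real.sqrt π * v < μ * Real.sqrt (2 * π * v) := by
          have h1 : Real.sqrt (40.5 * v) < μ := by
            rw [show μ = Real.sqrt (μ^2) by rw [Real.sqrt_sq hμ.le]]
            exact Real.sqrt_lt_sqrt (by positivity) key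
          have h2 : Real.sqrt (40.5 * v) * Real.sqrt (2 * π * v) = 9 * Real.sqrt π * v := by
            rw [← Real.sqrt_mul (by positivity),
              show 40.5 * v * (2 * π * v) = (9 * v)^2 * π by ring,
              Real.sqrt_mul (by positivity), Real.sqrt_sq (by positivity)]
            ring
          have h3 : (0:ℝ) < Real.sqrt (2 * π * v) := Real.sqrt_pos.2 (by positivity)
          nlinarith
        have hexp : Real.exp (-μ ^ 2 / (2 * v)) ≤ Real.exp (-20) := by
          apply Real.exp_le_exp.2
          rw [div_le_iff₀ (by positivity)]
          nlinarith
        have hexp20 : (2.7182818283 : ℝ) ^ 20 < Real.exp 20 := by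
          have := Real.exp_one_gt_d9
          calc (2.7182818283 : ℝ) ^ 20 < (Real.exp 1) ^ 20 :=
                pow_lt_pow_left₀ this (by norm_num) (by norm_num)
            _ = Real.exp 20 := by
                rw [show (20:ℝ) = (20:ℕ) * 1 by norm_num, Real.exp_nat_mul]
        have hexpneg : Real.exp (-20) < ((2.7182818283 : ℝ) ^ 20)⁻¹ := by
          rw [Real.exp_neg]
          exact inv_strictAnti₀ (by positivity) hexp20
        have hs3 : (0:ℝ) < Real.sqrt (2 * π * v) := Real.sqrt_pos.2 (by positivity)
        have hB : (Real.sqrt (2 * π * v))⁻¹ * Real.exp (-μ ^ 2 / (2 * v)) * (v / μ)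
            < Real.exp (-20) / (9 * Real.sqrt π) := by
          have hlhs : (Real.sqrt (2 * π * v))⁻¹ * Real.exp (-μ ^ 2 / (2 * v)) * (v / μ)
              = Real.exp (-μ ^ 2 / (2 * v)) * (v / (μ * Real.sqrt (2 * π * v))) := by
            field_simp
          rw [hlhs]
          have h9 : (0:ℝ) < 9 * Real.sqrt π := by positivity
          have hfrac : v / (μ * Real.sqrt (2 * π * v)) < (9 * Real.sqrt π)⁻¹ := by
            rw [div_lt_iff₀ (by positivity), inv_mul_eq_div, lt_div_iff₀ h9]
            nlinarith
          calc Real.exp (-μ ^ 2 / (2 * v)) * (v / (μ * Real.sqrt (2 * π * v)))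
              ≤ Real.exp (-20) * (v / (μ * Real.sqrt (2 * π * v))) :=
                mul_le_mul_of_nonneg_right hexp (by positivity)
            _ < Real.exp (-20) * (9 * Real.sqrt π)⁻¹ :=
                mul_lt_mul_of_pos_left hfrac (Real.exp_pos _)
            _ = Real.exp (-20) / (9 * Real.sqrt π) := (div_eq_mul_inv _ _).symm
        calc (Real.sqrt (2 * π * v))⁻¹ * Real.exp (-μ ^ 2 / (2 * v)) * (v / μ)
            < Real.exp (-20) / (9 * Real.sqrt π) := hB
          _ < ((2.7182818283 : ℝ) ^ 20)⁻¹ / (9 * 1.77) := by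
              apply div_lt_div₀ hexpneg (by nlinarith) (by positivity) (by positivity)
          _ < 2 / 10 ^ 10 := by norm_num

/-- Security foundation: if `τ > 40.5·(4 − 3h)/((3h − 2)²·α)` and
`Y ∼ N((3h−2)ατ, (4−3h)ατ)`, then `Pr(Y ≤ 0) < 2·10⁻¹⁰`. -/
theorem eden_security_foundation
    {Ω : Type*} [MeasurableSpace Ω] (P : Measure Ω) [IsProbabilityMeasure P]
    (h α τ : ℝ)
    (hh : h ∈ Set.Ioc (2 / 3 : ℝ) 1) (hα : α ∈ Set.Ioc (0 : ℝ) 1) (hτ : 0 < τ)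
    (hτ' : τ > 40.5 * (4 - 3 * h) / ((3 * h - 2) ^ 2 * α))
    (Y : Ω → ℝ)
    (hY : P.map Y = gaussianReal ((3 * h - 2) * α * τ) ((4 - 3 * h) * α * τ).toNNReal) :
    P {ω | Y ω ≤ 0} < ENNReal.ofReal (2 / 10 ^ 10) := by
  obtain ⟨hh1, hh2⟩ := hh
  obtain ⟨hα1, hα2⟩ := hα
  have h3 : 0 < 3 * h - 2 := by linarith
  have h4 : 0 < 4 - 3 * h := by linarith
  have hμpos : 0 < (3 * h - 2) * α * τ := by positivity
  have hvpos : 0 < (4 - 3 * h) * α * τ := by positivity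
  have key : 40.5 * ((4 - 3 * h) * α * τ) < ((3 * h - 2) * α * τ) ^ 2 := by
    rw [gt_iff_lt, div_lt_iff₀ (by positivity)] at hτ'
    nlinarith [mul_pos hα1 hτ, mul_pos (mul_pos hα1 hτ) (mul_pos hα1 hτ)]
  have hYm : AEMeasurable Y P := by
    by_contra hc
    rw [Measure.map_of_not_aemeasurable hc] at hY
    have h1 : (gaussianReal ((3 * h - 2) * α * τ) ((4 - 3 * h) * α * τ).toNNReal)
        Set.univ = 1 := measure_univ
    rw [← hY] at h1
    simp at h1
  have hset : {ω | Y ω ≤ 0} = Y ⁻¹' (Set.Iic 0) := rfl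
  rw [hset, ← Measure.map_apply_of_aemeasurable hYm measurableSet_Iic, hY]
  exact my_gauss_tail hμpos hvpos key
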